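/- Replacement of the 1-morphism part of a gauge transformation: Let F : G → H be a morphism of cosimplicial crossed groupoids, suppose (f, c) : (y, h, b) → (y', h', b') is a gauge transformation between descent data in H, and suppose v ∈ H⁰₂(y) is such that f̃ := f ∘ D(v). Then setting c̃ := Ad(h⁻¹)(v_{(1)}⁻¹) ∘ c ∘ v_{(0)}, the pair (f̃, c̃) is also a gauge transformation (y, h, b) → (y', h', b'). -/

import Mathlib

/-! Crossed groupoids (= crossed modules over groupoids), following Yekutieli,
"Combinatorial descent data for gerbes". -/

structure CrossedGroupoid : Type 1 where
  Obj : Type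
  Hom : Obj → Obj → Type
  id : ∀ x, Hom x x
  comp : ∀ {x y z}, Hom y z → Hom x y → Hom x z
  inv : ∀ {x y}, Hom x y → Hom y x
  comp_assoc : ∀ {x y z w} (h : Hom z w) (g : Hom y z) (f : Hom x y),
    comp (comp h g) f = comp h (comp g f)
  id_comp : ∀ {x y} (f : Hom x y), comp (id y) f = f
  comp_id : ∀ {x y} (f : Hom x y), comp f (id x) = f
  inv_comp : ∀ {x y} (f : Hom x y), comp (inv f) f = id x
  comp_inv : ∀ {x y} (f : Hom x y), comp f (inv f) = id y
  -- the totally disconnected groupoid 𝒢₂, i.e. a family of groups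
  G2 : Obj → Type
  mul : ∀ {x}, G2 x → G2 x → G2 x
  one : ∀ x, G2 x
  inv2 : ∀ {x}, G2 x → G2 x
  mul_assoc : ∀ {x} (a b c : G2 x), mul (mul a b) c = mul a (mul b c)
  one_mul : ∀ {x} (a : G2 x), mul (one x) a = a
  mul_one : ∀ {x} (a : G2 x), mul a (one x) = a
  inv2_mul : ∀ {x} (a : G2 x), mul (inv2 a) a = one x
  -- the twisting: an action of 𝒢₁ on 𝒢₂
  Ad : ∀ {x y}, Hom x y → G2 x → G2 y
  Ad_mul : ∀ {x y} (g : Hom x y) (a b : G2 x), Ad g (mul a b) = mul (Ad g a) (Ad g b)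
  Ad_one : ∀ {x y} (g : Hom x y), Ad g (one x) = one y
  Ad_id : ∀ {x} (a : G2 x), Ad (id x) a = a
  Ad_comp : ∀ {x y z} (h : Hom y z) (g : Hom x y) (a : G2 x),
    Ad (comp h g) a = Ad h (Ad g a)
  -- the feedback D : 𝒢₂ → 𝒢₁, identity on objects
  D : ∀ {x}, G2 x → Hom x x
  D_mul : ∀ {x} (a b : G2 x), D (mul a b) = comp (D a) (D b)
  D_one : ∀ x, D (one x) = id x
  -- equivariance of the feedback
  D_Ad : ∀ {x y} (g : Hom x y) (a : G2 x), D (Ad g a) = comp (comp g (D a)) (inv g)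
  -- Peiffer condition
  peiffer : ∀ {x} (a b : G2 x), Ad (D a) b = mul (mul a b) (inv2 a)

namespace CrossedGroupoid

/-- Transport of 1-morphisms along equalities of objects. -/
def hcast (G : CrossedGroupoid) {x x' y y' : G.Obj} (ex : x = x') (ey : y = y')
    (f : G.Hom x y) : G.Hom x' y' := ey ▸ ex ▸ f

/-- Transport of 2-morphisms along an equality of objects. -/
def cast2 (G : CrossedGroupoid) {x x' : G.Obj} (e : x = x') (a : G.G2 x) : G.G2 x' := e ▸ a

/-- The relation "isomorphic in 𝒢₁". -/
def pi0Rel (G : CrossedGroupoid) : G.Obj → G.Obj → Prop := fun x y => Nonempty (G.Hom x y)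

/-- π₀ of a crossed groupoid: isomorphism classes of objects of 𝒢₁. -/
def pi0 (G : CrossedGroupoid) : Type := Quot G.pi0Rel

/-- The right action relation on a hom-set: g' = g ∘ D(a). -/
def homRel (G : CrossedGroupoid) (x x' : G.Obj) : G.Hom x x' → G.Hom x x' → Prop :=
  fun g g' => ∃ a : G.G2 x, g' = G.comp g (G.D a)

/-- π₁(G, x, x') := 𝒢₁(x,x') / 𝒢₂(x). -/
def pi1' (G : CrossedGroupoid) (x x' : G.Obj) : Type := Quot (G.homRel x x')

/-- π₁(G, x) = Coker(D : 𝒢₂(x) → 𝒢₁(x)) as a quotient set. -/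
def pi1 (G : CrossedGroupoid) (x : G.Obj) : Type := G.pi1' x x

/-- π₂(G, x) = Ker(D : 𝒢₂(x) → 𝒢₁(x)). -/
def pi2 (G : CrossedGroupoid) (x : G.Obj) : Type := {a : G.G2 x // G.D a = G.id x}

end CrossedGroupoid

/-- A morphism of crossed groupoids. -/
structure CrossedGroupoidHom (G H : CrossedGroupoid) where
  obj : G.Obj → H.Obj
  map1 : ∀ {x y : G.Obj}, G.Hom x y → H.Hom (obj x) (obj y)
  map2 : ∀ {x : G.Obj}, G.G2 x → H.G2 (obj x)
  map1_comp : ∀ {x y z : G.Obj} (g : G.Hom y z) (f : G.Hom x y),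
    map1 (G.comp g f) = H.comp (map1 g) (map1 f)
  map1_id : ∀ x : G.Obj, map1 (G.id x) = H.id (obj x)
  map2_mul : ∀ {x : G.Obj} (a b : G.G2 x), map2 (G.mul a b) = H.mul (map2 a) (map2 b)
  map_D : ∀ {x : G.Obj} (a : G.G2 x), map1 (G.D a) = H.D (map2 a)
  map_Ad : ∀ {x y : G.Obj} (g : G.Hom x y) (a : G.G2 x),
    map2 (G.Ad g a) = H.Ad (map1 g) (map2 a)

namespace CrossedGroupoidHom

/-- Identity morphism of crossed groupoids. -/
def id (G : CrossedGroupoid) : CrossedGroupoidHom G G where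
  obj := fun x => x
  map1 := fun f => f
  map2 := fun a => a
  map1_comp := fun _ _ => rfl
  map1_id := fun _ => rfl
  map2_mul := fun _ _ => rfl
  map_D := fun _ => rfl
  map_Ad := fun _ _ => rfl

/-- Composition of morphisms of crossed groupoids. -/
def comp {G H K : CrossedGroupoid} (F₂ : CrossedGroupoidHom H K) (F₁ : CrossedGroupoidHom G H) :
    CrossedGroupoidHom G K where
  obj := fun x => F₂.obj (F₁.obj x)
  map1 := fun f => F₂.map1 (F₁.map1 f)
  map2 := fun a => F₂.map2 (F₁.map2 a)
  map1_comp := fun g f => by rw [F₁.map1_comp, F₂.map1_comp]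
  map1_id := fun x => by rw [F₁.map1_id, F₂.map1_id]
  map2_mul := fun a b => by rw [F₁.map2_mul, F₂.map2_mul]
  map_D := fun a => by rw [F₁.map_D, F₂.map_D]
  map_Ad := fun g a => by rw [F₁.map_Ad, F₂.map_Ad]

variable {G H : CrossedGroupoid}

/-- The induced map on π₀. -/
def pi0map (F : CrossedGroupoidHom G H) : G.pi0 → H.pi0 :=
  Quot.map F.obj (fun _ _ h => ⟨F.map1 h.some⟩)

/-- The induced map on π₁(−, x, x'). -/
def pi1'map (F : CrossedGroupoidHom G H) (x x' : G.Obj) :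
    G.pi1' x x' → H.pi1' (F.obj x) (F.obj x') :=
  Quot.map F.map1 (by
    rintro g g' ⟨a, rfl⟩
    exact ⟨F.map2 a, by rw [F.map1_comp, F.map_D]⟩)

/-- The induced map on π₁(−, x). -/
def pi1map (F : CrossedGroupoidHom G H) (x : G.Obj) : G.pi1 x → H.pi1 (F.obj x) :=
  F.pi1'map x x

/-- The induced map on π₂(−, x). -/
def pi2map (F : CrossedGroupoidHom G H) (x : G.Obj) : G.pi2 x → H.pi2 (F.obj x) :=
  fun a => ⟨F.map2 a.1, by rw [← F.map_D, a.2, F.map1_id]⟩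

/-- A weak equivalence of crossed groupoids: bijective on π₀, π₁ and π₂. -/
def IsWeakEquiv (F : CrossedGroupoidHom G H) : Prop :=
  Function.Bijective F.pi0map ∧ (∀ x, Function.Bijective (F.pi1map x)) ∧
    (∀ x, Function.Bijective (F.pi2map x))

end CrossedGroupoidHom

/-! ### Combinatorics of the simplex category -/

/-- The vertex (i) of Δ^q, as a monotone map Δ⁰ → Δ^q. -/
def vtxMap {q : ℕ} (i : Fin (q + 1)) : Fin 1 →o Fin (q + 1) :=
  ⟨fun _ => i, fun _ _ _ => le_rfl⟩

/-- The edge (i,j) of Δ^q, as a monotone map Δ¹ → Δ^q. -/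
def edgeMap {q : ℕ} (i j : Fin (q + 1)) (h : i ≤ j) : Fin 2 →o Fin (q + 1) :=
  ⟨fun k => if (k : ℕ) = 0 then i else j, by
    intro a b hab
    have hab' : (a : ℕ) ≤ (b : ℕ) := hab
    show (if (a : ℕ) = 0 then i else j) ≤ (if (b : ℕ) = 0 then i else j)
    by_cases ha : (a : ℕ) = 0
    · by_cases hb : (b : ℕ) = 0
      · rw [if_pos ha, if_pos hb]
      · rw [if_pos ha, if_neg hb]; exact h
    · have hb : ¬ (b : ℕ) = 0 := fun hb0 => ha (Nat.le_zero.mp (hb0 ▸ hab'))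
      rw [if_neg ha, if_neg hb]⟩

/-- The triangle (i,j,k) of Δ^q, as a monotone map Δ² → Δ^q. -/
def triMap {q : ℕ} (i j k : Fin (q + 1)) (hij : i ≤ j) (hjk : j ≤ k) :
    Fin 3 →o Fin (q + 1) :=
  ⟨fun m => if (m : ℕ) = 0 then i else if (m : ℕ) = 1 then j else k, by
    intro a b hab
    have hab' : (a : ℕ) ≤ (b : ℕ) := hab
    show (if (a : ℕ) = 0 then i else if (a : ℕ) = 1 then j else k) ≤
      (if (b : ℕ) = 0 then i else if (b : ℕ) = 1 then j else k)
    by_cases ha0 : (a : ℕ) = 0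
    · by_cases hb0 : (b : ℕ) = 0
      · rw [if_pos ha0, if_pos hb0]
      · by_cases hb1 : (b : ℕ) = 1
        · rw [if_pos ha0, if_neg hb0, if_pos hb1]; exact hij
        · rw [if_pos ha0, if_neg hb0, if_neg hb1]; exact hij.trans hjk
    · by_cases ha1 : (a : ℕ) = 1
      · have hb0 : ¬ (b : ℕ) = 0 := by omega
        by_cases hb1 : (b : ℕ) = 1
        · rw [if_neg ha0, if_pos ha1, if_neg hb0, if_pos hb1]
        · rw [if_neg ha0, if_pos ha1, if_neg hb0, if_neg hb1]; exact hjk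
      · have hb0 : ¬ (b : ℕ) = 0 := by omega
        have hb1 : ¬ (b : ℕ) = 1 := by omega
        rw [if_neg ha0, if_neg ha1, if_neg hb0, if_neg hb1]⟩

theorem comp_vtxMap {p q : ℕ} (α : Fin (p + 1) →o Fin (q + 1)) (i : Fin (p + 1)) :
    α.comp (vtxMap i) = vtxMap (α i) := rfl

/-! ### Cosimplicial crossed groupoids -/

/-- A cosimplicial crossed groupoid: a functor Δ → CrGrpd. -/
structure CosimplicialCrossedGroupoid : Type 1 where
  obj : ℕ → CrossedGroupoid
  map : ∀ {p q : ℕ}, (Fin (p + 1) →o Fin (q + 1)) → CrossedGroupoidHom (obj p) (obj q)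
  map_id : ∀ p, map (OrderHom.id : Fin (p + 1) →o Fin (p + 1)) = CrossedGroupoidHom.id (obj p)
  map_comp : ∀ {p q r : ℕ} (β : Fin (q + 1) →o Fin (r + 1)) (α : Fin (p + 1) →o Fin (q + 1)),
    map (β.comp α) = (map β).comp (map α)

namespace CosimplicialCrossedGroupoid

variable (G : CosimplicialCrossedGroupoid)

theorem obj_comp {p q r : ℕ} (β : Fin (q + 1) →o Fin (r + 1)) (α : Fin (p + 1) →o Fin (q + 1))
    (x : (G.obj p).Obj) :
    (G.map β).obj ((G.map α).obj x) = (G.map (β.comp α)).obj x := by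
  rw [G.map_comp]; rfl

/-- The object x of G⁰ pushed to the vertex (i) of Δ^q. -/
def X (x : (G.obj 0).Obj) (q : ℕ) (i : Fin (q + 1)) : (G.obj q).Obj :=
  (G.map (vtxMap i)).obj x

theorem X_push (x : (G.obj 0).Obj) {p q : ℕ} (α : Fin (p + 1) →o Fin (q + 1))
    (i : Fin (p + 1)) : (G.map α).obj (G.X x p i) = G.X x q (α i) := by
  unfold X
  rw [obj_comp, comp_vtxMap]

/-- Pushing a 1-morphism between vertex objects along α. -/
def push1 {x : (G.obj 0).Obj} {p q : ℕ} (α : Fin (p + 1) →o Fin (q + 1))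
    {i j : Fin (p + 1)} (g : (G.obj p).Hom (G.X x p i) (G.X x p j)) :
    (G.obj q).Hom (G.X x q (α i)) (G.X x q (α j)) :=
  (G.obj q).hcast (G.X_push x α i) (G.X_push x α j) ((G.map α).map1 g)

/-- Pushing a 2-morphism at a vertex object along α. -/
def push2 {x : (G.obj 0).Obj} {p q : ℕ} (α : Fin (p + 1) →o Fin (q + 1))
    {i : Fin (p + 1)} (a : (G.obj p).G2 (G.X x p i)) :
    (G.obj q).G2 (G.X x q (α i)) :=
  (G.obj q).cast2 (G.X_push x α i) ((G.map α).map2 a)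

/-- Yekutieli's combinatorial descent conditions (Definition 1.5):
the failure-of-1-cocycle condition and the twisted 2-cocycle condition. -/
def IsDescent (x : (G.obj 0).Obj)
    (g : (G.obj 1).Hom (G.X x 1 0) (G.X x 1 1))
    (a : (G.obj 2).G2 (G.X x 2 0)) : Prop :=
  ((G.obj 2).comp ((G.obj 2).comp ((G.obj 2).inv (G.push1 (edgeMap 0 2 (by decide)) g))
      (G.push1 (edgeMap 1 2 (by decide)) g)) (G.push1 (edgeMap 0 1 (by decide)) g)
    = (G.obj 2).D a)
  ∧
  ((G.obj 3).mul ((G.obj 3).mul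
        ((G.obj 3).inv2 (G.push2 (triMap 0 1 3 (by decide) (by decide)) a))
        (G.push2 (triMap 0 2 3 (by decide) (by decide)) a))
      (G.push2 (triMap 0 1 2 (by decide) (by decide)) a)
    = (G.obj 3).Ad ((G.obj 3).inv (G.push1 (edgeMap 0 1 (by decide)) g))
        (G.push2 (triMap 1 2 3 (by decide) (by decide)) a))

/-- A combinatorial descent datum (Definition 1.5). -/
structure Desc (G : CosimplicialCrossedGroupoid) where
  x : (G.obj 0).Obj
  g : (G.obj 1).Hom (G.X x 1 0) (G.X x 1 1)
  a : (G.obj 2).G2 (G.X x 2 0)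
  isDescent : G.IsDescent x g a

/-- The Yekutieli gauge-transformation conditions (Definition 1.7) for a pair (f, c). -/
def IsGauge (x : (G.obj 0).Obj) (g : (G.obj 1).Hom (G.X x 1 0) (G.X x 1 1))
    (a : (G.obj 2).G2 (G.X x 2 0))
    (x' : (G.obj 0).Obj) (g' : (G.obj 1).Hom (G.X x' 1 0) (G.X x' 1 1))
    (a' : (G.obj 2).G2 (G.X x' 2 0))
    (f : (G.obj 0).Hom x x') (c : (G.obj 1).G2 (G.X x 1 0)) : Prop :=
  (g' = (G.obj 1).comp ((G.obj 1).comp ((G.obj 1).comp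
      ((G.map (vtxMap (1 : Fin 2))).map1 f) g) ((G.obj 1).D c))
      ((G.obj 1).inv ((G.map (vtxMap (0 : Fin 2))).map1 f)))
  ∧
  (a' = (G.obj 2).Ad ((G.map (vtxMap (0 : Fin 3))).map1 f)
    ((G.obj 2).mul ((G.obj 2).mul ((G.obj 2).mul
        ((G.obj 2).inv2 (G.push2 (edgeMap 0 2 (by decide)) c)) a)
        ((G.obj 2).Ad ((G.obj 2).inv (G.push1 (edgeMap 0 1 (by decide)) g))
          (G.push2 (edgeMap 1 2 (by decide)) c)))
      (G.push2 (edgeMap 0 1 (by decide)) c)))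

/-- Gauge equivalence of descent data. -/
def GaugeEquiv (P Q : G.Desc) : Prop :=
  ∃ (f : (G.obj 0).Hom P.x Q.x) (c : (G.obj 1).G2 (G.X P.x 1 0)),
    G.IsGauge P.x P.g P.a Q.x Q.g Q.a f c

/-- The explicit formula for the transported 2-morphism a'
(Definition 1.7(ii) / Lemma 1.9). -/
def transportA {x x' : (G.obj 0).Obj} (f : (G.obj 0).Hom x x')
    (g : (G.obj 1).Hom (G.X x 1 0) (G.X x 1 1))
    (a : (G.obj 2).G2 (G.X x 2 0)) (c : (G.obj 1).G2 (G.X x 1 0)) :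
    (G.obj 2).G2 (G.X x' 2 0) :=
  (G.obj 2).Ad ((G.map (vtxMap (0 : Fin 3))).map1 f)
    ((G.obj 2).mul ((G.obj 2).mul ((G.obj 2).mul
        ((G.obj 2).inv2 (G.push2 (edgeMap 0 2 (by decide)) c)) a)
        ((G.obj 2).Ad ((G.obj 2).inv (G.push1 (edgeMap 0 1 (by decide)) g))
          (G.push2 (edgeMap 1 2 (by decide)) c)))
      (G.push2 (edgeMap 0 1 (by decide)) c))

end CosimplicialCrossedGroupoid

/-- A morphism of cosimplicial crossed groupoids. -/
structure CosimplicialMor (G H : CosimplicialCrossedGroupoid) where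
  app : ∀ p, CrossedGroupoidHom (G.obj p) (H.obj p)
  naturality : ∀ {p q : ℕ} (α : Fin (p + 1) →o Fin (q + 1)),
    (app q).comp (G.map α) = (H.map α).comp (app p)

namespace CosimplicialMor

variable {G H : CosimplicialCrossedGroupoid}

theorem app_X (F : CosimplicialMor G H) (x : (G.obj 0).Obj) (q : ℕ) (i : Fin (q + 1)) :
    (F.app q).obj (G.X x q i) = H.X ((F.app 0).obj x) q i :=
  congrFun (congrArg CrossedGroupoidHom.obj (F.naturality (vtxMap i))) x

/-- Image of an object of G⁰. -/
def objD (F : CosimplicialMor G H) (x : (G.obj 0).Obj) : (H.obj 0).Obj := (F.app 0).obj x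

/-- Image of a 1-morphism in dimension 0. -/
def mapF (F : CosimplicialMor G H) {x x' : (G.obj 0).Obj} (f : (G.obj 0).Hom x x') :
    (H.obj 0).Hom (F.objD x) (F.objD x') := (F.app 0).map1 f

/-- Image of the 1-morphism part of a descent datum. -/
def mapG (F : CosimplicialMor G H) {x : (G.obj 0).Obj}
    (g : (G.obj 1).Hom (G.X x 1 0) (G.X x 1 1)) :
    (H.obj 1).Hom (H.X (F.objD x) 1 0) (H.X (F.objD x) 1 1) :=
  (H.obj 1).hcast (F.app_X x 1 0) (F.app_X x 1 1) ((F.app 1).map1 g)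

/-- Image of the 2-morphism part of a descent datum. -/
def mapA (F : CosimplicialMor G H) {x : (G.obj 0).Obj} (a : (G.obj 2).G2 (G.X x 2 0)) :
    (H.obj 2).G2 (H.X (F.objD x) 2 0) :=
  (H.obj 2).cast2 (F.app_X x 2 0) ((F.app 2).map2 a)

/-- Image of the 2-morphism part of a gauge transformation. -/
def mapC (F : CosimplicialMor G H) {x : (G.obj 0).Obj} (c : (G.obj 1).G2 (G.X x 1 0)) :
    (H.obj 1).G2 (H.X (F.objD x) 1 0) :=
  (H.obj 1).cast2 (F.app_X x 1 0) ((F.app 1).map2 c)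

/-- A weak equivalence of cosimplicial crossed groupoids. -/
def IsWeakEquiv (F : CosimplicialMor G H) : Prop := ∀ p, (F.app p).IsWeakEquiv

end CosimplicialMor

/-! ### Auxiliary lemmas for gauge_replace -/

namespace CrossedGroupoid

variable {K : CrossedGroupoid}

theorem mul_inv2' {x : K.Obj} (a : K.G2 x) : K.mul a (K.inv2 a) = K.one x := by
  calc K.mul a (K.inv2 a)
      = K.mul (K.one x) (K.mul a (K.inv2 a)) := (K.one_mul _).symm
    _ = K.mul (K.mul (K.inv2 (K.inv2 a)) (K.inv2 a)) (K.mul a (K.inv2 a)) := by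
        rw [K.inv2_mul]
    _ = K.mul (K.inv2 (K.inv2 a)) (K.mul (K.mul (K.inv2 a) a) (K.inv2 a)) := by
        rw [K.mul_assoc, K.mul_assoc]
    _ = K.mul (K.inv2 (K.inv2 a)) (K.inv2 a) := by rw [K.inv2_mul, K.one_mul]
    _ = K.one x := K.inv2_mul _

theorem inv2_unique' {x : K.Obj} {a u : K.G2 x} (h : K.mul u a = K.one x) :
    u = K.inv2 a := by
  calc u = K.mul u (K.one x) := (K.mul_one u).symm
    _ = K.mul u (K.mul a (K.inv2 a)) := by rw [mul_inv2']
    _ = K.mul (K.mul u a) (K.inv2 a) := (K.mul_assoc _ _ _).symm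
    _ = K.inv2 a := by rw [h, K.one_mul]

theorem inv2_mul_rev' {x : K.Obj} (a b : K.G2 x) :
    K.inv2 (K.mul a b) = K.mul (K.inv2 b) (K.inv2 a) := by
  refine (inv2_unique' ?_).symm
  rw [K.mul_assoc, ← K.mul_assoc (K.inv2 a), K.inv2_mul, K.one_mul, K.inv2_mul]

theorem inv2_inv2' {x : K.Obj} (a : K.G2 x) : K.inv2 (K.inv2 a) = a := by
  refine (inv2_unique' ?_).symm
  exact mul_inv2' a

theorem Ad_inv2' {x y : K.Obj} (g : K.Hom x y) (a : K.G2 x) :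
    K.Ad g (K.inv2 a) = K.inv2 (K.Ad g a) := by
  refine inv2_unique' ?_
  rw [← K.Ad_mul, K.inv2_mul, K.Ad_one]

theorem mul_inv2_cancel_left' {x : K.Obj} (a b : K.G2 x) :
    K.mul a (K.mul (K.inv2 a) b) = b := by
  rw [← K.mul_assoc, mul_inv2', K.one_mul]

theorem inv2_mul_cancel_left' {x : K.Obj} (a b : K.G2 x) :
    K.mul (K.inv2 a) (K.mul a b) = b := by
  rw [← K.mul_assoc, K.inv2_mul, K.one_mul]

theorem inv_unique' {x y : K.Obj} {g : K.Hom x y} {u : K.Hom y x}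
    (h : K.comp u g = K.id x) : u = K.inv g := by
  calc u = K.comp u (K.id y) := (K.comp_id u).symm
    _ = K.comp u (K.comp g (K.inv g)) := by rw [K.comp_inv]
    _ = K.comp (K.comp u g) (K.inv g) := (K.comp_assoc _ _ _).symm
    _ = K.inv g := by rw [h, K.id_comp]

theorem inv_inv' {x y : K.Obj} (g : K.Hom x y) : K.inv (K.inv g) = g := by
  refine (inv_unique' ?_).symm
  exact K.comp_inv g

theorem inv_comp_rev' {x y z : K.Obj} (g : K.Hom y z) (h : K.Hom x y) :
    K.inv (K.comp g h) = K.comp (K.inv h) (K.inv g) := by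
  refine (inv_unique' ?_).symm
  rw [K.comp_assoc, ← K.comp_assoc (K.inv g), K.inv_comp, K.id_comp, K.inv_comp]

theorem D_inv2' {x : K.Obj} (a : K.G2 x) : K.D (K.inv2 a) = K.inv (K.D a) := by
  refine inv_unique' ?_
  rw [← K.D_mul, K.inv2_mul, K.D_one]

theorem comp_inv_cancel_left' {x y z : K.Obj} (g : K.Hom y z) (h : K.Hom x z) :
    K.comp g (K.comp (K.inv g) h) = h := by
  rw [← K.comp_assoc, K.comp_inv, K.id_comp]

theorem inv_comp_cancel_left' {x y z : K.Obj} (g : K.Hom y z) (h : K.Hom x y) :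
    K.comp (K.inv g) (K.comp g h) = h := by
  rw [← K.comp_assoc, K.inv_comp, K.id_comp]

/-- Transport of 2-morphisms commutes with multiplication. -/
theorem cast2_mul {x x' : K.Obj} (e : x = x') (a b : K.G2 x) :
    K.cast2 e (K.mul a b) = K.mul (K.cast2 e a) (K.cast2 e b) := by
  subst e; rfl

theorem cast2_inv2 {x x' : K.Obj} (e : x = x') (a : K.G2 x) :
    K.cast2 e (K.inv2 a) = K.inv2 (K.cast2 e a) := by subst e; rfl

theorem cast2_Ad {x x' y y' : K.Obj} (ex : x = x') (ey : y = y')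
    (g : K.Hom x y) (a : K.G2 x) :
    K.cast2 ey (K.Ad g a) = K.Ad (K.hcast ex ey g) (K.cast2 ex a) := by
  subst ex; subst ey; rfl

theorem hcast_inv {x x' y y' : K.Obj} (ex : x = x') (ey : y = y') (g : K.Hom x y) :
    K.hcast ey ex (K.inv g) = K.inv (K.hcast ex ey g) := by
  subst ex; subst ey; rfl

/-- Key computation for the first gauge condition. -/
theorem cond1_key (K : CrossedGroupoid) {y0 y1 y0' y1' : K.Obj}
    (f0 : K.Hom y0 y0') (f1 : K.Hom y1 y1') (g : K.Hom y0 y1)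
    (c v0 : K.G2 y0) (v1 : K.G2 y1) :
    K.comp (K.comp (K.comp (K.comp f1 (K.D v1)) g)
        (K.D (K.mul (K.mul (K.Ad (K.inv g) (K.inv2 v1)) c) v0)))
      (K.inv (K.comp f0 (K.D v0)))
    = K.comp (K.comp (K.comp f1 g) (K.D c)) (K.inv f0) := by
  rw [K.D_mul, K.D_mul, K.D_Ad, inv_comp_rev', D_inv2', inv_inv']
  simp only [K.comp_assoc, comp_inv_cancel_left', inv_comp_cancel_left']

/-- Key computation for the second gauge condition. -/
theorem cond2_key (K : CrossedGroupoid) {x0 x1 x2 : K.Obj}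
    (g01 : K.Hom x0 x1) (g12 : K.Hom x1 x2) (g02 : K.Hom x0 x2)
    (a : K.G2 x0)
    (hdesc : K.comp (K.comp (K.inv g02) g12) g01 = K.D a)
    (c01 c02 v0 : K.G2 x0) (c12 : K.G2 x1) (v1 : K.G2 x1) (v2 : K.G2 x2) :
    K.mul (K.mul (K.mul
        (K.inv2 (K.mul (K.mul (K.Ad (K.inv g02) (K.inv2 v2)) c02) v0)) a)
        (K.Ad (K.inv g01) (K.mul (K.mul (K.Ad (K.inv g12) (K.inv2 v2)) c12) v1)))
      (K.mul (K.mul (K.Ad (K.inv g01) (K.inv2 v1)) c01) v0)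
    = K.mul (K.mul (K.inv2 v0)
        (K.mul (K.mul (K.mul (K.inv2 c02) a) (K.Ad (K.inv g01) c12)) c01)) v0 := by
  have hg : K.comp g12 g01 = K.comp g02 (K.D a) := by
    have h := congrArg (K.comp g02) hdesc
    rwa [← K.comp_assoc, comp_inv_cancel_left'] at h
  have key : K.Ad (K.inv g01) (K.Ad (K.inv g12) v2)
      = K.mul (K.mul (K.inv2 a) (K.Ad (K.inv g02) v2)) a := by
    rw [← K.Ad_comp, ← inv_comp_rev', hg, inv_comp_rev', ← D_inv2', K.Ad_comp,
      K.peiffer, inv2_inv2']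
  simp only [K.Ad_mul, Ad_inv2', key, inv2_mul_rev', inv2_inv2', K.mul_assoc,
    inv2_mul_cancel_left', mul_inv2_cancel_left']

theorem sandwich (K : CrossedGroupoid) {x : K.Obj} (v E : K.G2 x) :
    K.mul (K.mul v (K.mul (K.mul (K.inv2 v) E) v)) (K.inv2 v) = E := by
  simp only [K.mul_assoc, inv2_mul_cancel_left', mul_inv2_cancel_left', mul_inv2', K.mul_one]

end CrossedGroupoid

namespace CrossedGroupoidHom

variable {K L : CrossedGroupoid}

theorem map2_one' (F : CrossedGroupoidHom K L) (x : K.Obj) :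
    F.map2 (K.one x) = L.one (F.obj x) := by
  have h : L.mul (F.map2 (K.one x)) (F.map2 (K.one x)) = F.map2 (K.one x) := by
    rw [← F.map2_mul, K.one_mul]
  calc F.map2 (K.one x)
      = L.mul (L.mul (L.inv2 (F.map2 (K.one x))) (F.map2 (K.one x)))
          (F.map2 (K.one x)) := by rw [L.inv2_mul, L.one_mul]
    _ = L.mul (L.inv2 (F.map2 (K.one x)))
          (L.mul (F.map2 (K.one x)) (F.map2 (K.one x))) := L.mul_assoc _ _ _
    _ = L.one (F.obj x) := by rw [h, L.inv2_mul]

theorem map2_inv2' (F : CrossedGroupoidHom K L) {x : K.Obj} (a : K.G2 x) :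
    F.map2 (K.inv2 a) = L.inv2 (F.map2 a) := by
  refine CrossedGroupoid.inv2_unique' ?_
  rw [← F.map2_mul, K.inv2_mul, F.map2_one']

theorem map1_inv' (F : CrossedGroupoidHom K L) {x y : K.Obj} (g : K.Hom x y) :
    F.map1 (K.inv g) = L.inv (F.map1 g) := by
  refine CrossedGroupoid.inv_unique' ?_
  rw [← F.map1_comp, K.inv_comp, F.map1_id]

/-- If two morphisms of crossed groupoids are equal, their `map2`s agree up to transport. -/
theorem map2_eq_of_eq {F F' : CrossedGroupoidHom K L} (h : F = F') {x : K.Obj}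
    (a : K.G2 x) (e : F.obj x = F'.obj x) :
    L.cast2 e (F.map2 a) = F'.map2 a := by
  subst h; rfl

end CrossedGroupoidHom

namespace CosimplicialCrossedGroupoid

variable (G : CosimplicialCrossedGroupoid)

theorem push2_mul {x : (G.obj 0).Obj} {p q : ℕ} (α : Fin (p + 1) →o Fin (q + 1))
    {i : Fin (p + 1)} (a b : (G.obj p).G2 (G.X x p i)) :
    G.push2 α ((G.obj p).mul a b) = (G.obj q).mul (G.push2 α a) (G.push2 α b) := by
  unfold push2
  rw [(G.map α).map2_mul, CrossedGroupoid.cast2_mul]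

theorem push2_inv2 {x : (G.obj 0).Obj} {p q : ℕ} (α : Fin (p + 1) →o Fin (q + 1))
    {i : Fin (p + 1)} (a : (G.obj p).G2 (G.X x p i)) :
    G.push2 α ((G.obj p).inv2 a) = (G.obj q).inv2 (G.push2 α a) := by
  unfold push2
  rw [(G.map α).map2_inv2', CrossedGroupoid.cast2_inv2]

theorem push2_Ad {x : (G.obj 0).Obj} {p q : ℕ} (α : Fin (p + 1) →o Fin (q + 1))
    {i j : Fin (p + 1)} (g : (G.obj p).Hom (G.X x p i) (G.X x p j))
    (a : (G.obj p).G2 (G.X x p i)) :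
    G.push2 α ((G.obj p).Ad g a) = (G.obj q).Ad (G.push1 α g) (G.push2 α a) := by
  unfold push2 push1
  rw [(G.map α).map_Ad, CrossedGroupoid.cast2_Ad (G.X_push x α i) (G.X_push x α j)]

theorem push1_inv {x : (G.obj 0).Obj} {p q : ℕ} (α : Fin (p + 1) →o Fin (q + 1))
    {i j : Fin (p + 1)} (g : (G.obj p).Hom (G.X x p i) (G.X x p j)) :
    G.push1 α ((G.obj p).inv g) = (G.obj q).inv (G.push1 α g) := by
  unfold push1
  rw [(G.map α).map1_inv', CrossedGroupoid.hcast_inv]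

/-- Pushing a vertex 2-morphism along α lands at the image vertex. -/
theorem push2_vtx {x : (G.obj 0).Obj} (v : (G.obj 0).G2 x) {p q : ℕ}
    (α : Fin (p + 1) →o Fin (q + 1)) (k : Fin (p + 1)) :
    G.push2 α ((G.map (vtxMap k)).map2 v) = (G.map (vtxMap (α k))).map2 v := by
  have h : (G.map α).comp (G.map (vtxMap k)) = G.map (vtxMap (α k)) :=
    (G.map_comp α (vtxMap k)).symm
  exact CrossedGroupoidHom.map2_eq_of_eq h v (G.X_push x α k)

end CosimplicialCrossedGroupoid

/-- replacing the 1-morphism part of a gauge transformation: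
if f̃ = f ∘ D(v) and c̃ = Ad(h⁻¹)(v_(1)⁻¹) ∘ c ∘ v_(0), then (f̃, c̃) is again
a gauge transformation (y,h,b) → (y',h',b'). -/
theorem gauge_replace {G H : CosimplicialCrossedGroupoid} (F : CosimplicialMor G H)
    (P Q : H.Desc) (f : (H.obj 0).Hom P.x Q.x) (c : (H.obj 1).G2 (H.X P.x 1 0))
    (hfc : H.IsGauge P.x P.g P.a Q.x Q.g Q.a f c) (v : (H.obj 0).G2 P.x) :
    H.IsGauge P.x P.g P.a Q.x Q.g Q.a
      ((H.obj 0).comp f ((H.obj 0).D v))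
      ((H.obj 1).mul ((H.obj 1).mul
        ((H.obj 1).Ad ((H.obj 1).inv P.g)
          ((H.obj 1).inv2 ((H.map (vtxMap (1 : Fin 2))).map2 v))) c)
        ((H.map (vtxMap (0 : Fin 2))).map2 v)) := by
  obtain ⟨h1, h2⟩ := hfc
  constructor
  · -- first gauge condition
    rw [h1, (H.map (vtxMap (1 : Fin 2))).map1_comp, (H.map (vtxMap (1 : Fin 2))).map_D,
      (H.map (vtxMap (0 : Fin 2))).map1_comp, (H.map (vtxMap (0 : Fin 2))).map_D]
    exact ((H.obj 1).cond1_key ((H.map (vtxMap (0 : Fin 2))).map1 f)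
      ((H.map (vtxMap (1 : Fin 2))).map1 f) P.g c
      ((H.map (vtxMap (0 : Fin 2))).map2 v) ((H.map (vtxMap (1 : Fin 2))).map2 v)).symm
  · -- second gauge condition
    rw [h2, (H.map (vtxMap (0 : Fin 3))).map1_comp, (H.map (vtxMap (0 : Fin 3))).map_D,
      (H.obj 2).Ad_comp, (H.obj 2).peiffer]
    erw [H.push2_mul, H.push2_mul, H.push2_mul, H.push2_mul, H.push2_mul, H.push2_mul]
    simp only [H.push2_mul, H.push2_Ad, H.push1_inv, H.push2_inv2, H.push2_vtx]
    erw [H.push2_inv2, H.push2_inv2, H.push2_inv2]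
    simp only [H.push2_vtx]
    have key2 := (H.obj 2).cond2_key (H.push1 (edgeMap 0 1 (by decide)) P.g)
      (H.push1 (edgeMap 1 2 (by decide)) P.g) (H.push1 (edgeMap 0 2 (by decide)) P.g)
      P.a P.isDescent.1 (H.push2 (edgeMap 0 1 (by decide)) c)
      (H.push2 (edgeMap 0 2 (by decide)) c) ((H.map (vtxMap (0 : Fin 3))).map2 v)
      (H.push2 (edgeMap 1 2 (by decide)) c) ((H.map (vtxMap (1 : Fin 3))).map2 v)
      ((H.map (vtxMap (2 : Fin 3))).map2 v)
    exact (congrArg ((H.obj 2).Ad ((H.map (vtxMap (0 : Fin 3))).map1 f))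
      ((congrArg (fun t => (H.obj 2).mul
          ((H.obj 2).mul ((H.map (vtxMap (0 : Fin 3))).map2 v) t)
          ((H.obj 2).inv2 ((H.map (vtxMap (0 : Fin 3))).map2 v))) key2).trans
        ((H.obj 2).sandwich ((H.map (vtxMap (0 : Fin 3))).map2 v) _))).symm
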